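/- Let p > 1 and let u : ℝ → ℂ be locally integrable with ‖u‖_{B_p} < ∞. Then u is of vanishing mean oscillation: for every ε > 0 there exists δ > 0 such that every bounded interval I ⊂ ℝ with |I| ≤ δ satisfies (1/|I|)∫_I |u(t) − u_I| dt ≤ ε. -/

import Mathlib

open MeasureTheory Set Filter Topology
open scoped ENNReal

/-- The average of `u` over the bounded interval `(a, b)`. -/
noncomputable def intervalAvg (u : ℝ → ℂ) (a b : ℝ) : ℂ :=
  (b - a)⁻¹ • ∫ t in Set.Ioo a b, u t

/-- The mean oscillation of `u` over the bounded interval `(a, b)`. -/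
noncomputable def oscAvg (u : ℝ → ℂ) (a b : ℝ) : ℝ :=
  (b - a)⁻¹ * ∫ t in Set.Ioo a b, ‖u t - intervalAvg u a b‖

/-- The BMO seminorm `‖u‖_*` (as an extended real, `⊤` meaning `u ∉ BMO`). -/
noncomputable def bmoNorm (u : ℝ → ℂ) : ℝ≥0∞ :=
  ⨆ (a : ℝ) (b : ℝ) (_ : a < b), ENNReal.ofReal (oscAvg u a b)

/-- The John–Nirenberg inequality holds on `ℝ` with constants `C₀, CJN`. -/
def JNineq (C₀ CJN : ℝ) : Prop :=
  ∀ u : ℝ → ℂ, MeasureTheory.LocallyIntegrable u →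
    0 < bmoNorm u → bmoNorm u ≠ ⊤ →
    ∀ a b : ℝ, a < b → ∀ lam : ℝ, 0 < lam →
      MeasureTheory.volume {t ∈ Set.Ioo a b | lam ≤ ‖u t - intervalAvg u a b‖} ≤
        ENNReal.ofReal (C₀ * (b - a) * Real.exp (-(CJN * lam) / (bmoNorm u).toReal))

/-- The homogeneous `p`-Besov seminorm `‖u‖_{B_p}`. -/
noncomputable def besovNorm (p : ℝ) (u : ℝ → ℂ) : ℝ≥0∞ :=
  (∫⁻ t : ℝ, ∫⁻ s : ℝ, ENNReal.ofReal (‖u t - u s‖ ^ p / (t - s) ^ 2)) ^ (1 / p)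

/-- The dilated kernel `φ_y(x) = y⁻¹ φ(y⁻¹ x)`. -/
noncomputable def dil (φ : ℝ → ℂ) (y x : ℝ) : ℂ := (y : ℂ)⁻¹ * φ (x / y)

/-- a function of finite `p`-Besov seminorm has vanishing mean oscillation. -/
theorem stmt3 (p : ℝ) (hp : 1 < p) (u : ℝ → ℂ) (hu : LocallyIntegrable u)
    (hfin : besovNorm p u ≠ ⊤) :
    ∀ ε : ℝ, 0 < ε → ∃ δ : ℝ, 0 < δ ∧
      ∀ a b : ℝ, a < b → b - a ≤ δ → oscAvg u a b ≤ ε := by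
  intro ε hε
  have hp0 : (0:ℝ) < p := lt_trans one_pos hp
  have hpq : p.HolderConjugate (Real.conjExponent p) := Real.HolderConjugate.conjExponent hp
  set q : ℝ := Real.conjExponent p with hqdef
  have hq0 : (0:ℝ) < q := hpq.symm.pos
  have hum : AEMeasurable u (volume : Measure ℝ) := hu.aestronglyMeasurable.aemeasurable
  have hu1 : AEMeasurable (fun z : ℝ × ℝ => u z.1) (volume.prod volume) :=
    hum.comp_quasiMeasurePreserving Measure.quasiMeasurePreserving_fst
  have hu2 : AEMeasurable (fun z : ℝ × ℝ => u z.2) (volume.prod volume) :=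
    hum.comp_quasiMeasurePreserving Measure.quasiMeasurePreserving_snd
  have hN : AEMeasurable (fun z : ℝ × ℝ => ‖u z.1 - u z.2‖) (volume.prod volume) :=
    (hu1.sub hu2).norm
  set F : ℝ × ℝ → ℝ≥0∞ := fun z => ENNReal.ofReal (‖u z.1 - u z.2‖ ^ p / (z.1 - z.2) ^ 2)
    with hFdef
  have hFm : AEMeasurable F (volume.prod volume) := by
    apply ENNReal.measurable_ofReal.comp_aemeasurable
    exact ((Real.continuous_rpow_const hp0.le).measurable.comp_aemeasurable hN).div
      ((measurable_fst.sub measurable_snd).pow_const 2).aemeasurable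
  have hFfin : (∫⁻ z, F z ∂((volume : Measure ℝ).prod volume)) ≠ ⊤ := by
    rw [MeasureTheory.lintegral_prod F hFm]
    intro h
    apply hfin
    unfold besovNorm
    rw [show (∫⁻ t : ℝ, ∫⁻ s : ℝ, ENNReal.ofReal (‖u t - u s‖ ^ p / (t - s) ^ 2))
        = ∫⁻ t : ℝ, ∫⁻ s : ℝ, F (t, s) from rfl, h]
    exact ENNReal.top_rpow_of_pos (by positivity)
  have hεp : (ENNReal.ofReal (ε ^ p)) ≠ 0 := by
    rw [Ne, ENNReal.ofReal_eq_zero, not_le]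
    positivity
  obtain ⟨δ₀, hδ₀, habs⟩ := exists_pos_setLIntegral_lt_of_measure_lt hFfin hεp
  set c : ℝ≥0∞ := min δ₀ 1 with hc
  have hc0 : c ≠ 0 := (lt_min hδ₀ zero_lt_one).ne'
  have hctop : c ≠ ⊤ := ((min_le_right _ _).trans_lt ENNReal.one_lt_top).ne
  have hcR : 0 < c.toReal := ENNReal.toReal_pos hc0 hctop
  have hcR1 : c.toReal ≤ 1 := by
    have := ENNReal.toReal_mono (b := (1:ℝ≥0∞)) ENNReal.one_ne_top (min_le_right δ₀ 1)
    simpa using this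
  refine ⟨c.toReal / 2, by positivity, ?_⟩
  intro a b hab hble
  set δ : ℝ := c.toReal / 2 with hδdef
  have hδ0 : 0 < δ := by positivity
  have hδ1 : δ ≤ 1 := by rw [hδdef]; linarith
  have hL : (0:ℝ) < b - a := sub_pos.2 hab
  set L : ℝ := b - a with hLdef
  set I : Set ℝ := Ioo a b with hIdef
  have hIvol : (volume : Measure ℝ) I = ENNReal.ofReal L := Real.volume_Ioo
  -- measure of the square is small
  have hSmeas : ((volume : Measure ℝ).prod volume) (I ×ˢ I) < δ₀ := by
    rw [Measure.prod_prod, hIvol, ← ENNReal.ofReal_mul hL.le]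
    calc ENNReal.ofReal (L * L) ≤ ENNReal.ofReal δ := by
          apply ENNReal.ofReal_le_ofReal
          nlinarith
      _ < ENNReal.ofReal c.toReal := by
          rw [ENNReal.ofReal_lt_ofReal_iff hcR, hδdef]; linarith
      _ = c := ENNReal.ofReal_toReal hctop
      _ ≤ δ₀ := min_le_left _ _
  -- basic integrability facts
  have hInt : IntegrableOn u I volume :=
    (hu.integrableOn_isCompact isCompact_Icc).mono_set Ioo_subset_Icc_self
  have hIfin : (volume : Measure ℝ) I < ⊤ := by rw [hIvol]; exact ENNReal.ofReal_lt_top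
  have hconst : ∀ cc : ℂ, IntegrableOn (fun _ : ℝ => cc) I volume := fun cc =>
    integrableOn_const hIfin.ne
  have hsub : ∀ t : ℝ, IntegrableOn (fun s => u t - u s) I volume := fun t =>
    (hconst _).sub hInt
  have key1 : ∀ t : ℝ, u t - intervalAvg u a b = L⁻¹ • ∫ s in I, (u t - u s) := by
    intro t
    rw [integral_sub (hconst _) hInt, setIntegral_const, measureReal_def, hIvol, ENNReal.toReal_ofReal hL.le,
      smul_sub, smul_smul, inv_mul_cancel₀ hL.ne', one_smul]
    rfl
  have hpt : ∀ t : ℝ, ‖u t - intervalAvg u a b‖ ≤ L⁻¹ * ∫ s in I, ‖u t - u s‖ := by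
    intro t
    rw [key1 t, norm_smul, Real.norm_eq_abs, abs_of_pos (inv_pos.2 hL)]
    exact mul_le_mul_of_nonneg_left (norm_integral_le_integral_norm _) (inv_nonneg.2 hL.le)
  have hosce : IntegrableOn (fun t => ‖u t - intervalAvg u a b‖) I volume :=
    (hInt.sub (hconst _)).norm
  -- move to ℝ≥0∞
  rw [← ENNReal.ofReal_le_ofReal_iff hε.le]
  set Lns : ℝ≥0∞ := ENNReal.ofReal L with hLns
  have hLns0 : Lns ≠ 0 := by
    rw [hLns, Ne, ENNReal.ofReal_eq_zero, not_le]; exact hL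
  have hLnstop : Lns ≠ ⊤ := ENNReal.ofReal_ne_top
  have hLnsinvtop : Lns⁻¹ ≠ ⊤ := ENNReal.inv_ne_top.2 hLns0
  set g : ℝ × ℝ → ℝ≥0∞ := fun z => ENNReal.ofReal ‖u z.1 - u z.2‖ with hgdef
  have hgm : AEMeasurable g (volume.prod volume) := ENNReal.measurable_ofReal.comp_aemeasurable hN
  set G : ℝ × ℝ → ℝ≥0∞ := fun z => ENNReal.ofReal ((z.1 - z.2) ^ 2) with hGdef
  have hGm : Measurable G :=
    ENNReal.measurable_ofReal.comp ((measurable_fst.sub measurable_snd).pow_const 2)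
  -- pointwise factorization
  have hfact : ∀ z : ℝ × ℝ, g z = (F z) ^ (1/p) * (G z) ^ (1/p) := by
    intro z
    rcases eq_or_ne z.1 z.2 with h | h
    · have h0 : G z = 0 := by simp [hGdef, h]
      have hg0 : g z = 0 := by simp [hgdef, h]
      rw [hg0, h0, ENNReal.zero_rpow_of_pos (show (0:ℝ) < 1/p by positivity), mul_zero]
    · have hdne : z.1 - z.2 ≠ 0 := sub_ne_zero.2 h
      have hd : (0:ℝ) < (z.1 - z.2) ^ 2 := by positivity
      have hn : (0:ℝ) ≤ ‖u z.1 - u z.2‖ := norm_nonneg _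
      have hA : (0:ℝ) ≤ ‖u z.1 - u z.2‖ ^ p / (z.1 - z.2) ^ 2 := by positivity
      have hreal : (‖u z.1 - u z.2‖ ^ p / (z.1 - z.2) ^ 2) ^ (1/p) * ((z.1 - z.2) ^ 2) ^ (1/p)
          = ‖u z.1 - u z.2‖ := by
        rw [← Real.mul_rpow hA hd.le, div_mul_cancel₀ _ hd.ne', ← Real.rpow_mul hn,
          mul_one_div_cancel hp0.ne', Real.rpow_one]
      rw [hgdef, hFdef, hGdef]
      simp only
      rw [ENNReal.ofReal_rpow_of_nonneg hA (by positivity),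
        ENNReal.ofReal_rpow_of_nonneg hd.le (by positivity),
        ← ENNReal.ofReal_mul (by positivity), hreal]
  -- the iterated lintegral over I × I as a product lintegral
  have hg2 : AEMeasurable g (((volume : Measure ℝ).restrict I).prod ((volume : Measure ℝ).restrict I)) := by
    rw [Measure.prod_restrict]; exact hgm.restrict
  have hiter : (∫⁻ t in I, ∫⁻ s in I, g (t, s)) =
      ∫⁻ z in I ×ˢ I, g z ∂((volume : Measure ℝ).prod volume) := by
    rw [← MeasureTheory.lintegral_prod _ hg2, Measure.prod_restrict]
  -- Hölder
  set μS : Measure (ℝ × ℝ) := ((volume : Measure ℝ).prod volume).restrict (I ×ˢ I) with hμS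
  have hf1 : AEMeasurable (fun z => F z ^ (1/p)) μS :=
    ENNReal.continuous_rpow_const.measurable.comp_aemeasurable hFm.restrict
  have hf2 : AEMeasurable (fun z => G z ^ (1/p)) μS :=
    (ENNReal.continuous_rpow_const.measurable.comp hGm).aemeasurable
  have holder : (∫⁻ z in I ×ˢ I, g z ∂((volume : Measure ℝ).prod volume)) ≤
      (∫⁻ z, F z ∂μS) ^ (1/p) * (∫⁻ z, G z ^ ((1/p) * q) ∂μS) ^ (1/q) := by
    have h1 := ENNReal.lintegral_mul_le_Lp_mul_Lq μS hpq hf1 hf2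
    have e1 : ∀ z : ℝ × ℝ, (F z ^ (1/p)) ^ p = F z := by
      intro z; rw [← ENNReal.rpow_mul, one_div_mul_cancel hp0.ne', ENNReal.rpow_one]
    have e2 : ∀ z : ℝ × ℝ, (G z ^ (1/p)) ^ q = G z ^ ((1/p) * q) := by
      intro z; rw [← ENNReal.rpow_mul]
    calc (∫⁻ z in I ×ˢ I, g z ∂((volume : Measure ℝ).prod volume))
        = ∫⁻ z, ((fun z => F z ^ (1/p)) * fun z => G z ^ (1/p)) z ∂μS := by
          rw [hμS]; exact lintegral_congr fun z => hfact z
      _ ≤ (∫⁻ z, (F z ^ (1/p)) ^ p ∂μS) ^ (1/p) * (∫⁻ z, (G z ^ (1/p)) ^ q ∂μS) ^ (1/q) := h1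
      _ = (∫⁻ z, F z ∂μS) ^ (1/p) * (∫⁻ z, G z ^ ((1/p) * q) ∂μS) ^ (1/q) := by
          simp_rw [e1, e2]
  -- first Hölder factor
  have hfac1 : (∫⁻ z, F z ∂μS) ^ (1/p) ≤ ENNReal.ofReal ε := by
    have h1 : (∫⁻ z, F z ∂μS) ≤ ENNReal.ofReal (ε ^ p) := (habs _ hSmeas).le
    calc (∫⁻ z, F z ∂μS) ^ (1/p) ≤ (ENNReal.ofReal (ε ^ p)) ^ (1/p) :=
          ENNReal.rpow_le_rpow h1 (by positivity)
      _ = ENNReal.ofReal ((ε ^ p) ^ (1/p)) :=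
          ENNReal.ofReal_rpow_of_nonneg (by positivity) (by positivity)
      _ = ENNReal.ofReal ε := by
          rw [← Real.rpow_mul hε.le, mul_one_div_cancel hp0.ne', Real.rpow_one]
  -- second Hölder factor
  have hfac2 : (∫⁻ z, G z ^ ((1/p) * q) ∂μS) ^ (1/q) ≤ ENNReal.ofReal (L ^ 2) := by
    have hbd : ∀ z ∈ I ×ˢ I, G z ^ ((1/p) * q) ≤ (ENNReal.ofReal (L ^ 2)) ^ ((1/p) * q) := by
      rintro ⟨t, s⟩ ⟨ht, hs⟩
      apply ENNReal.rpow_le_rpow _ (by positivity)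
      apply ENNReal.ofReal_le_ofReal
      have h1 : t - s ≤ L := by simp only [hIdef, mem_Ioo] at ht hs; rw [hLdef]; linarith
      have h2 : -L ≤ t - s := by simp only [hIdef, mem_Ioo] at ht hs; rw [hLdef]; linarith
      exact sq_le_sq' h2 h1
    have hSm : MeasurableSet (I ×ˢ I) := measurableSet_Ioo.prod measurableSet_Ioo
    have h2 : (∫⁻ z, G z ^ ((1/p) * q) ∂μS) ≤
        (ENNReal.ofReal (L ^ 2)) ^ ((1/p) * q) * (ENNReal.ofReal (L ^ 2)) := by
      calc (∫⁻ z, G z ^ ((1/p) * q) ∂μS)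
          ≤ ∫⁻ _ in I ×ˢ I, (ENNReal.ofReal (L ^ 2)) ^ ((1/p) * q)
              ∂((volume : Measure ℝ).prod volume) := setLIntegral_mono' hSm hbd
        _ = (ENNReal.ofReal (L ^ 2)) ^ ((1/p) * q) * (ENNReal.ofReal (L ^ 2)) := by
            rw [setLIntegral_const, Measure.prod_prod, hIvol, ← ENNReal.ofReal_mul hL.le, ← sq]
    calc (∫⁻ z, G z ^ ((1/p) * q) ∂μS) ^ (1/q)
        ≤ ((ENNReal.ofReal (L ^ 2)) ^ ((1/p) * q) * (ENNReal.ofReal (L ^ 2))) ^ (1/q) :=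
          ENNReal.rpow_le_rpow h2 (by positivity)
      _ = (ENNReal.ofReal (L ^ 2)) ^ ((1/p) * q * (1/q)) * (ENNReal.ofReal (L ^ 2)) ^ (1/q) := by
          rw [ENNReal.mul_rpow_of_nonneg _ _ (by positivity), ← ENNReal.rpow_mul]
      _ = (ENNReal.ofReal (L ^ 2)) ^ (1/p + 1/q) := by
          rw [← ENNReal.rpow_add _ _ (by rw [Ne, ENNReal.ofReal_eq_zero, not_le]; positivity)
            ENNReal.ofReal_ne_top]
          congr 1
          rw [mul_assoc, mul_one_div_cancel hq0.ne', mul_one]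
      _ = ENNReal.ofReal (L ^ 2) := by
          rw [show 1/p + 1/q = 1 by
            rw [one_div, one_div]; exact hpq.inv_add_inv_eq_one, ENNReal.rpow_one]
  -- assemble
  have hmain : ENNReal.ofReal (oscAvg u a b) ≤ Lns⁻¹ * (Lns⁻¹ *
      ∫⁻ z in I ×ˢ I, g z ∂((volume : Measure ℝ).prod volume)) := by
    have step1 : ENNReal.ofReal (oscAvg u a b) =
        Lns⁻¹ * ∫⁻ t in I, ENNReal.ofReal ‖u t - intervalAvg u a b‖ := by
      simp only [oscAvg]
      rw [ENNReal.ofReal_mul (inv_nonneg.2 hL.le), ENNReal.ofReal_inv_of_pos hL,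
        ofReal_integral_eq_lintegral_ofReal hosce
          (Eventually.of_forall fun t => norm_nonneg _)]
    have step2 : (∫⁻ t in I, ENNReal.ofReal ‖u t - intervalAvg u a b‖) ≤
        ∫⁻ t in I, Lns⁻¹ * ∫⁻ s in I, g (t, s) := by
      apply lintegral_mono
      intro t
      calc ENNReal.ofReal ‖u t - intervalAvg u a b‖
          ≤ ENNReal.ofReal (L⁻¹ * ∫ s in I, ‖u t - u s‖) := ENNReal.ofReal_le_ofReal (hpt t)
        _ = Lns⁻¹ * ∫⁻ s in I, g (t, s) := by
            rw [ENNReal.ofReal_mul (inv_nonneg.2 hL.le), ENNReal.ofReal_inv_of_pos hL,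
              ofReal_integral_eq_lintegral_ofReal (hsub t).norm
                (Eventually.of_forall fun s => norm_nonneg _)]
    calc ENNReal.ofReal (oscAvg u a b)
        = Lns⁻¹ * ∫⁻ t in I, ENNReal.ofReal ‖u t - intervalAvg u a b‖ := step1
      _ ≤ Lns⁻¹ * ∫⁻ t in I, Lns⁻¹ * ∫⁻ s in I, g (t, s) := mul_le_mul_right step2 _
      _ = Lns⁻¹ * (Lns⁻¹ * ∫⁻ t in I, ∫⁻ s in I, g (t, s)) := by
          rw [lintegral_const_mul' _ _ hLnsinvtop]
      _ = Lns⁻¹ * (Lns⁻¹ * ∫⁻ z in I ×ˢ I, g z ∂((volume : Measure ℝ).prod volume)) := by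
          rw [hiter]
  calc ENNReal.ofReal (oscAvg u a b)
      ≤ Lns⁻¹ * (Lns⁻¹ * ∫⁻ z in I ×ˢ I, g z ∂((volume : Measure ℝ).prod volume)) := hmain
    _ ≤ Lns⁻¹ * (Lns⁻¹ * (ENNReal.ofReal ε * ENNReal.ofReal (L ^ 2))) := by
        refine mul_le_mul_right (mul_le_mul_right ?_ _) _
        exact holder.trans (mul_le_mul' hfac1 hfac2)
    _ = ENNReal.ofReal ε := by
        have hL2 : ENNReal.ofReal (L ^ 2) = Lns * Lns := by
          rw [hLns, ← ENNReal.ofReal_mul hL.le, ← sq]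
        rw [hL2]
        calc Lns⁻¹ * (Lns⁻¹ * (ENNReal.ofReal ε * (Lns * Lns)))
            = (Lns⁻¹ * Lns) * ((Lns⁻¹ * Lns) * ENNReal.ofReal ε) := by ring
          _ = ENNReal.ofReal ε := by rw [ENNReal.inv_mul_cancel hLns0 hLnstop, one_mul, one_mul]
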